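/- For every finite group 𝔊 there exists a finite simple graph G whose automorphism group Aut(G) is isomorphic (as a group) to 𝔊. -/

import Mathlib

open scoped Classical

/-- A *nut graph*: a finite simple graph on at least 2 vertices whose real adjacency
matrix has nullity (kernel dimension) exactly 1 and such that every nonzero vector in
the kernel of the adjacency matrix has all entries nonzero. -/
def SimpleGraph.IsNut {V : Type*} [Fintype V] (G : SimpleGraph V) : Prop :=
  2 ≤ Fintype.card V ∧
  Module.finrank ℝ (LinearMap.ker (Matrix.mulVecLin (G.adjMatrix ℝ))) = 1 ∧
  ∀ x : V → ℝ, Matrix.mulVecLin (G.adjMatrix ℝ) x = 0 → x ≠ 0 → ∀ v : V, x v ≠ 0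

/-- The automorphism group of a simple graph, realised as the subgroup of the
permutations of the vertex set that preserve adjacency (and non-adjacency). -/
def SimpleGraph.autGroup {V : Type*} (G : SimpleGraph V) : Subgroup (Equiv.Perm V) where
  carrier := { σ | ∀ u v : V, G.Adj (σ u) (σ v) ↔ G.Adj u v }
  mul_mem' := by
    intro σ τ hσ hτ u v
    simpa [hσ (τ u) (τ v)] using hτ u v
  one_mem' := by intro u v; rfl
  inv_mem' := by
    intro σ hσ u v
    have := hσ (σ⁻¹ u) (σ⁻¹ v)
    simpa using this.symm

set_option linter.unusedSectionVars false
namespace FruchtAux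
variable {𝔊 : Type*} [Group 𝔊]
def L (ι : 𝔊 → ℕ) (b : Bool) (x : 𝔊) : ℕ := 2 * ι x + (bif b then 2 else 1)
lemma one_le_L (ι : 𝔊 → ℕ) (b : Bool) (x : 𝔊) : 1 ≤ L ι b x := by
  cases b <;> simp [L]
lemma L_inj {ι : 𝔊 → ℕ} (hι : Function.Injective ι) {b b' : Bool} {x x' : 𝔊}
    (h : L ι b x = L ι b' x') : b = b' ∧ x = x' := by
  cases b <;> cases b' <;> simp [L] at h ⊢ <;>
    first
      | omega
      | · apply hι; omega
structure Tail (𝔊 : Type*) [Group 𝔊] (ι : 𝔊 → ℕ) : Type _ where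
  g : 𝔊
  x : 𝔊
  hx : x ≠ 1
  b : Bool
  j : ℕ
  hj : j ≤ L ι b x
lemma Tail.ext' {ι : 𝔊 → ℕ} {t t' : Tail 𝔊 ι} (hg : t.g = t'.g) (hx : t.x = t'.x)
    (hb : t.b = t'.b) (hj : t.j = t'.j) : t = t' := by
  cases t; cases t'
  cases hg; cases hx; cases hb; cases hj; rfl
@[simp] lemma Tail.mk_j {ι : 𝔊 → ℕ} {g x : 𝔊} {hx : x ≠ 1} {b : Bool} {j : ℕ} {hj} :
    (Tail.mk g x hx b j hj : Tail 𝔊 ι).j = j := rfl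

variable (ι : 𝔊 → ℕ)
def hubOf (t : Tail 𝔊 ι) : 𝔊 := bif t.b then t.g * t.x else t.g
def adj : (𝔊 ⊕ Tail 𝔊 ι) → (𝔊 ⊕ Tail 𝔊 ι) → Prop
  | .inl _, .inl _ => False
  | .inl g, .inr t => t.j = 0 ∧ hubOf ι t = g
  | .inr t, .inl g => t.j = 0 ∧ hubOf ι t = g
  | .inr t, .inr t' => t.g = t'.g ∧ t.x = t'.x ∧
      ((t.b = t'.b ∧ (t'.j = t.j + 1 ∨ t.j = t'.j + 1)) ∨
        (t.j = 0 ∧ t'.j = 0 ∧ t.b ≠ t'.b))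
def FG : SimpleGraph (𝔊 ⊕ Tail 𝔊 ι) where
  Adj := adj ι
  symm := by
    constructor
    rintro (g | t) (g' | t') h
    · exact h
    · exact h
    · exact h
    · obtain ⟨h1, h2, h3⟩ := h
      refine ⟨h1.symm, h2.symm, ?_⟩
      rcases h3 with ⟨hb, hj⟩ | ⟨hj, hj', hb⟩
      · exact Or.inl ⟨hb.symm, hj.symm⟩
      · exact Or.inr ⟨hj', hj, fun e => hb e.symm⟩
  loopless := by
    constructor
    rintro (g | t) h
    · exact h
    · rcases h.2.2 with ⟨_, hj | hj⟩ | ⟨_, _, hb⟩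
      · omega
      · omega
      · exact hb rfl
lemma adj_inl_inl {g g' : 𝔊} : ¬ (FG ι).Adj (.inl g) (.inl g') := id
lemma adj_inl_inr {g : 𝔊} {t : Tail 𝔊 ι} :
    (FG ι).Adj (.inl g) (.inr t) ↔ t.j = 0 ∧ hubOf ι t = g := Iff.rfl
lemma adj_inr_inl {g : 𝔊} {t : Tail 𝔊 ι} :
    (FG ι).Adj (.inr t) (.inl g) ↔ t.j = 0 ∧ hubOf ι t = g := Iff.rfl
lemma adj_inr_inr {t t' : Tail 𝔊 ι} :
    (FG ι).Adj (.inr t) (.inr t') ↔ t.g = t'.g ∧ t.x = t'.x ∧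
      ((t.b = t'.b ∧ (t'.j = t.j + 1 ∨ t.j = t'.j + 1)) ∨
        (t.j = 0 ∧ t'.j = 0 ∧ t.b ≠ t'.b)) := Iff.rfl

/-! ## neighbour classification -/

/-- the three neighbours of a base vertex -/
def baseHub (t : Tail 𝔊 ι) : 𝔊 ⊕ Tail 𝔊 ι := .inl (hubOf ι t)
def baseMate (t : Tail 𝔊 ι) : 𝔊 ⊕ Tail 𝔊 ι := .inr ⟨t.g, t.x, t.hx, !t.b, 0, Nat.zero_le _⟩
def baseNext (t : Tail 𝔊 ι) : 𝔊 ⊕ Tail 𝔊 ι := .inr ⟨t.g, t.x, t.hx, t.b, 1, one_le_L ι _ _⟩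

lemma base_adj_hub {t : Tail 𝔊 ι} (h0 : t.j = 0) : (FG ι).Adj (.inr t) (baseHub ι t) :=
  ⟨h0, rfl⟩
lemma base_adj_mate {t : Tail 𝔊 ι} (h0 : t.j = 0) : (FG ι).Adj (.inr t) (baseMate ι t) := by
  refine ⟨rfl, rfl, Or.inr ⟨h0, rfl, ?_⟩⟩
  show t.b ≠ !t.b
  simp
lemma base_adj_next {t : Tail 𝔊 ι} (h0 : t.j = 0) : (FG ι).Adj (.inr t) (baseNext ι t) := by
  refine ⟨rfl, rfl, Or.inl ⟨rfl, Or.inl ?_⟩⟩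
  show 1 = t.j + 1
  omega

lemma base_nbrs {t : Tail 𝔊 ι} (h0 : t.j = 0) (y : 𝔊 ⊕ Tail 𝔊 ι)
    (hy : (FG ι).Adj (.inr t) y) :
    y = baseHub ι t ∨ y = baseMate ι t ∨ y = baseNext ι t := by
  rcases y with g | t'
  · left; rw [adj_inr_inl] at hy; rw [baseHub, hy.2]
  · rw [adj_inr_inr] at hy
    obtain ⟨hg, hx, hrest⟩ := hy
    rcases hrest with ⟨hb, hj | hj⟩ | ⟨_, hj0, hb⟩
    · right; right
      refine congrArg Sum.inr (Tail.ext' hg.symm hx.symm hb.symm ?_)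
      show t'.j = 1
      omega
    · omega
    · right; left
      refine congrArg Sum.inr (Tail.ext' hg.symm hx.symm ?_ hj0)
      show t'.b = !t.b
      cases hb' : t.b <;> cases hb'' : t'.b <;> simp_all

lemma base_hub_ne_mate (t : Tail 𝔊 ι) : baseHub ι t ≠ baseMate ι t := by simp [baseHub, baseMate]
lemma base_hub_ne_next (t : Tail 𝔊 ι) : baseHub ι t ≠ baseNext ι t := by simp [baseHub, baseNext]
lemma base_mate_ne_next (t : Tail 𝔊 ι) : baseMate ι t ≠ baseNext ι t := by
  intro h
  have h1 : (!t.b) = t.b := congrArg (fun y => match y with | Sum.inr t'' => t''.b | Sum.inl _ => t.b) h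
  cases hb : t.b <;> rw [hb] at h1 <;> simp at h1

/-- neighbours of a non-base tail vertex: previous one, and the next one if it exists -/
lemma tail_nbrs {t : Tail 𝔊 ι} (h1 : 1 ≤ t.j) (y : 𝔊 ⊕ Tail 𝔊 ι)
    (hy : (FG ι).Adj (.inr t) y) :
    y = .inr ⟨t.g, t.x, t.hx, t.b, t.j - 1, le_trans (Nat.sub_le _ _) t.hj⟩ ∨
      ∃ h : t.j + 1 ≤ L ι t.b t.x, y = .inr ⟨t.g, t.x, t.hx, t.b, t.j + 1, h⟩ := by
  rcases y with g | t'
  · rw [adj_inr_inl] at hy; omega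
  · rw [adj_inr_inr] at hy
    obtain ⟨hg, hx, hrest⟩ := hy
    rcases hrest with ⟨hb, hj | hj⟩ | ⟨hj0, _, _⟩
    · right
      have h2 := t'.hj
      rw [← hb, ← hx] at h2
      exact ⟨by omega, congrArg Sum.inr (Tail.ext' hg.symm hx.symm hb.symm hj)⟩
    · left
      refine congrArg Sum.inr (Tail.ext' hg.symm hx.symm hb.symm ?_)
      show t'.j = t.j - 1
      omega
    · omega

lemma tail_adj_prev {t : Tail 𝔊 ι} (h1 : 1 ≤ t.j) :
    (FG ι).Adj (.inr t) (.inr ⟨t.g, t.x, t.hx, t.b, t.j - 1, le_trans (Nat.sub_le _ _) t.hj⟩) := by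
  refine ⟨rfl, rfl, Or.inl ⟨rfl, Or.inr ?_⟩⟩
  show t.j = (t.j - 1) + 1
  omega

lemma tail_adj_next {t : Tail 𝔊 ι} (h : t.j + 1 ≤ L ι t.b t.x) :
    (FG ι).Adj (.inr t) (.inr ⟨t.g, t.x, t.hx, t.b, t.j + 1, h⟩) :=
  ⟨rfl, rfl, Or.inl ⟨rfl, Or.inl rfl⟩⟩

/-- neighbours of a hub -/
lemma hub_nbrs (g : 𝔊) (y : 𝔊 ⊕ Tail 𝔊 ι) (hy : (FG ι).Adj (.inl g) y) :
    ∃ t : Tail 𝔊 ι, y = .inr t ∧ t.j = 0 ∧ hubOf ι t = g := by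
  rcases y with g' | t
  · exact absurd hy (adj_inl_inl ι)
  · exact ⟨t, rfl, hy⟩

lemma hub_adj_u (g x : 𝔊) (hx : x ≠ 1) :
    (FG ι).Adj (.inl g) (.inr ⟨g, x, hx, false, 0, Nat.zero_le _⟩) :=
  ⟨rfl, rfl⟩

lemma hub_adj_v (g x : 𝔊) (hx : x ≠ 1) :
    (FG ι).Adj (.inl g) (.inr ⟨g * x⁻¹, x, hx, true, 0, Nat.zero_le _⟩) := by
  refine ⟨rfl, ?_⟩
  show g * x⁻¹ * x = g
  group

/-! ## pigeonhole helpers -/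

lemma three_in_two {α : Type*} {y1 y2 y3 p q : α} (h12 : y1 ≠ y2) (h13 : y1 ≠ y3)
    (h23 : y2 ≠ y3) (m1 : y1 = p ∨ y1 = q) (m2 : y2 = p ∨ y2 = q)
    (m3 : y3 = p ∨ y3 = q) : False := by
  rcases m1 <;> rcases m2 <;> rcases m3 <;> subst_vars <;> simp_all

lemma four_in_three {α : Type*} {y1 y2 y3 y4 p q r : α} (h12 : y1 ≠ y2) (h13 : y1 ≠ y3)
    (h14 : y1 ≠ y4) (h23 : y2 ≠ y3) (h24 : y2 ≠ y4) (h34 : y3 ≠ y4)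
    (m1 : y1 = p ∨ y1 = q ∨ y1 = r) (m2 : y2 = p ∨ y2 = q ∨ y2 = r)
    (m3 : y3 = p ∨ y3 = q ∨ y3 = r) (m4 : y4 = p ∨ y4 = q ∨ y4 = r) : False := by
  rcases m1 with h|h|h <;> rcases m2 with h2|h2|h2 <;> rcases m3 with h3|h3|h3 <;>
    rcases m4 with h4|h4|h4 <;> subst_vars <;> simp_all

lemma inr_mk_j {ι : 𝔊 → ℕ} {g x g' x' : 𝔊} {hx hx'} {b b' : Bool} {j j' : ℕ} {hj hj'}
    (h : (Sum.inr (Tail.mk g x hx b j hj) : 𝔊 ⊕ Tail 𝔊 ι) = Sum.inr (Tail.mk g' x' hx' b' j' hj')) :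
    j = j' := by
  injection h with h2
  exact congrArg Tail.j h2

lemma inr_mk_b {ι : 𝔊 → ℕ} {g x g' x' : 𝔊} {hx hx'} {b b' : Bool} {j j' : ℕ} {hj hj'}
    (h : (Sum.inr (Tail.mk g x hx b j hj) : 𝔊 ⊕ Tail 𝔊 ι) = Sum.inr (Tail.mk g' x' hx' b' j' hj')) :
    b = b' := by
  injection h with h2
  exact congrArg Tail.b h2

lemma inr_mk_x {ι : 𝔊 → ℕ} {g x g' x' : 𝔊} {hx hx'} {b b' : Bool} {j j' : ℕ} {hj hj'}
    (h : (Sum.inr (Tail.mk g x hx b j hj) : 𝔊 ⊕ Tail 𝔊 ι) = Sum.inr (Tail.mk g' x' hx' b' j' hj')) :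
    x = x' := by
  injection h with h2
  exact congrArg Tail.x h2

/-! ## the action of an automorphism -/

section Aut

variable {ι} (σ : Equiv.Perm (𝔊 ⊕ Tail 𝔊 ι))
  (hσ : ∀ u v, (FG ι).Adj (σ u) (σ v) ↔ (FG ι).Adj u v)

include hσ

lemma unmap {u y : 𝔊 ⊕ Tail 𝔊 ι} (h : (FG ι).Adj (σ u) y) : (FG ι).Adj u (σ.symm y) := by
  have h2 := hσ u (σ.symm y)
  rw [Equiv.apply_symm_apply] at h2
  exact h2.mp h

/-- the image of a top vertex is a top vertex -/
lemma top_image {t : Tail 𝔊 ι} (ht : t.j = L ι t.b t.x) :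
    ∃ t' : Tail 𝔊 ι, σ (.inr t) = .inr t' ∧ t'.j = L ι t'.b t'.x := by
  have h1 : 1 ≤ t.j := ht ▸ one_le_L ι t.b t.x
  have hAdjPrev : (FG ι).Adj (σ (.inr t))
      (σ (.inr ⟨t.g, t.x, t.hx, t.b, t.j - 1, le_trans (Nat.sub_le _ _) t.hj⟩)) :=
    (hσ _ _).mpr (tail_adj_prev ι h1)
  have huniq : ∀ y, (FG ι).Adj (σ (.inr t)) y →
      y = σ (.inr ⟨t.g, t.x, t.hx, t.b, t.j - 1, le_trans (Nat.sub_le _ _) t.hj⟩) := by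
    intro y hy
    have h2 := unmap σ hσ hy
    rcases tail_nbrs ι h1 _ h2 with h | ⟨hle, h⟩
    · rw [← Equiv.apply_symm_apply σ y, h]
    · omega
  cases hw : σ (.inr t) with
  | inl g =>
    rw [hw] at huniq
    have e1 := huniq _ (hub_adj_u ι g t.x t.hx)
    have e2 := huniq _ (hub_adj_v ι g t.x t.hx)
    have hb := inr_mk_b (e1.trans e2.symm)
    simp at hb
  | inr t' =>
    refine ⟨t', rfl, ?_⟩
    by_contra hne
    have hlt : t'.j < L ι t'.b t'.x := lt_of_le_of_ne t'.hj hne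
    rw [hw] at huniq
    rcases Nat.eq_zero_or_pos t'.j with h0 | hpos
    · have e1 := huniq _ (base_adj_hub ι h0)
      have e2 := huniq _ (base_adj_mate ι h0)
      exact base_hub_ne_mate ι t' (e1.trans e2.symm)
    · have e1 := huniq _ (tail_adj_prev ι hpos)
      have e2 := huniq _ (tail_adj_next ι (by omega : t'.j + 1 ≤ L ι t'.b t'.x))
      have := inr_mk_j (e1.trans e2.symm)
      omega

/-- the chain lemma: an automorphism maps each tail onto a tail of the same type,
preserving positions -/
lemma chain (hι : Function.Injective ι) (g x : 𝔊) (hx : x ≠ 1) (b : Bool) :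
    ∃ g' : 𝔊, ∀ j (hj : j ≤ L ι b x),
      σ (.inr ⟨g, x, hx, b, j, hj⟩) = .inr ⟨g', x, hx, b, j, hj⟩ := by
  obtain ⟨t', hw, ht'⟩ := top_image σ hσ (t := ⟨g, x, hx, b, L ι b x, le_refl _⟩) rfl
  have main : ∀ k, k ≤ L ι b x → k ≤ L ι t'.b t'.x ∧
      σ (.inr ⟨g, x, hx, b, L ι b x - k, Nat.sub_le _ _⟩) =
        .inr ⟨t'.g, t'.x, t'.hx, t'.b, L ι t'.b t'.x - k, Nat.sub_le _ _⟩ := by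
    intro k
    induction k using Nat.strong_induction_on with
    | _ k IH =>
      match k with
      | 0 =>
        intro _
        refine ⟨Nat.zero_le _, ?_⟩
        have e0 : (⟨g, x, hx, b, L ι b x - 0, Nat.sub_le _ _⟩ : Tail 𝔊 ι) =
            ⟨g, x, hx, b, L ι b x, le_refl _⟩ := Tail.ext' rfl rfl rfl (Nat.sub_zero _)
        rw [e0, hw]
        refine congrArg Sum.inr (Tail.ext' (t := t')
          (t' := ⟨t'.g, t'.x, t'.hx, t'.b, L ι t'.b t'.x - 0, Nat.sub_le _ _⟩) rfl rfl rfl ?_)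
        simp only [Tail.mk_j]
        omega
      | 1 =>
        intro hk
        have h1L' : 1 ≤ L ι t'.b t'.x := one_le_L ι _ _
        have hadj : (FG ι).Adj (σ (.inr ⟨g, x, hx, b, L ι b x, le_refl _⟩))
            (σ (.inr ⟨g, x, hx, b, L ι b x - 1, Nat.sub_le _ _⟩)) :=
          (hσ _ _).mpr (tail_adj_prev ι (t := ⟨g, x, hx, b, L ι b x, le_refl _⟩) hk)
        rw [hw] at hadj
        rcases tail_nbrs ι (show 1 ≤ t'.j by omega) _ hadj with h | ⟨hle, h⟩
        · refine ⟨h1L', ?_⟩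
          rw [h]
          refine congrArg Sum.inr (Tail.ext' rfl rfl rfl ?_)
          simp only [Tail.mk_j]
          omega
        · omega
      | (k+2) =>
        intro hk2
        obtain ⟨hk1L', ih1⟩ := IH (k+1) (by omega) (by omega)
        obtain ⟨hkL', ih0⟩ := IH k (by omega) (by omega)
        have hstep : k + 2 ≤ L ι t'.b t'.x := by
          by_contra hcon
          have hj0 : (⟨t'.g, t'.x, t'.hx, t'.b, L ι t'.b t'.x - (k+1), Nat.sub_le _ _⟩ : Tail 𝔊 ι).j = 0 := by
            simp only [Tail.mk_j]
            omega
          have mem : ∀ y, (FG ι).Adj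
              (.inr ⟨t'.g, t'.x, t'.hx, t'.b, L ι t'.b t'.x - (k+1), Nat.sub_le _ _⟩) y →
              y = σ (.inr ⟨g, x, hx, b, L ι b x - (k+1) - 1,
                    le_trans (Nat.sub_le _ _) (Nat.sub_le _ _)⟩) ∨
                y = σ (.inr ⟨g, x, hx, b, L ι b x - (k+1) + 1, by omega⟩) := by
            intro y hy
            rw [← ih1] at hy
            have h2 := unmap σ hσ hy
            rcases tail_nbrs ι (t := ⟨g, x, hx, b, L ι b x - (k+1), Nat.sub_le _ _⟩)
                (show 1 ≤ L ι b x - (k+1) by omega) _ h2 with h | ⟨hle, h⟩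
            · left
              rw [← Equiv.apply_symm_apply σ y, h]
            · right
              rw [← Equiv.apply_symm_apply σ y, h]
          exact three_in_two
            (base_hub_ne_mate ι _) (base_hub_ne_next ι _) (base_mate_ne_next ι _)
            (mem _ (base_adj_hub ι hj0)) (mem _ (base_adj_mate ι hj0))
            (mem _ (base_adj_next ι hj0))
        refine ⟨hstep, ?_⟩
        have hadj : (FG ι).Adj (σ (.inr ⟨g, x, hx, b, L ι b x - (k+1), Nat.sub_le _ _⟩))
            (σ (.inr ⟨g, x, hx, b, L ι b x - (k+2), Nat.sub_le _ _⟩)) := by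
          have h3 := tail_adj_prev ι (t := ⟨g, x, hx, b, L ι b x - (k+1), Nat.sub_le _ _⟩)
            (show 1 ≤ L ι b x - (k+1) by omega)
          have e : (⟨g, x, hx, b, L ι b x - (k+1) - 1,
              le_trans (Nat.sub_le _ _) (Nat.sub_le _ _)⟩ : Tail 𝔊 ι) =
              ⟨g, x, hx, b, L ι b x - (k+2), Nat.sub_le _ _⟩ :=
            Tail.ext' rfl rfl rfl (by simp only [Tail.mk_j]; omega)
          rw [e] at h3
          exact (hσ _ _).mpr h3
        rw [ih1] at hadj
        rcases tail_nbrs ι (t := ⟨t'.g, t'.x, t'.hx, t'.b, L ι t'.b t'.x - (k+1), Nat.sub_le _ _⟩)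
            (show 1 ≤ L ι t'.b t'.x - (k+1) by omega) _ hadj with h | ⟨hle, h⟩
        · rw [h]
          exact congrArg Sum.inr (Tail.ext' rfl rfl rfl (by simp only [Tail.mk_j]; omega))
        · exfalso
          have e2 : σ (.inr ⟨g, x, hx, b, L ι b x - (k+2), Nat.sub_le _ _⟩) =
              σ (.inr ⟨g, x, hx, b, L ι b x - k, Nat.sub_le _ _⟩) := by
            rw [h, ih0]
            exact congrArg Sum.inr (Tail.ext' rfl rfl rfl (by simp only [Tail.mk_j]; omega))
          have e3 := inr_mk_j (σ.injective e2)
          omega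
  obtain ⟨hLvL', hbase⟩ := main (L ι b x) le_rfl
  have hL'eq : L ι t'.b t'.x = L ι b x := by
    by_contra hcon
    have hgt : L ι b x < L ι t'.b t'.x := lt_of_le_of_ne hLvL' (Ne.symm hcon)
    have h1 : 1 ≤ L ι b x := one_le_L ι b x
    have hj0 : (⟨g, x, hx, b, L ι b x - L ι b x, Nat.sub_le _ _⟩ : Tail 𝔊 ι).j = 0 := by
      simp only [Tail.mk_j]
      omega
    have hq : ∀ y, (FG ι).Adj (.inr ⟨g, x, hx, b, L ι b x - L ι b x, Nat.sub_le _ _⟩) y →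
        σ y = .inr ⟨t'.g, t'.x, t'.hx, t'.b, L ι t'.b t'.x - L ι b x - 1,
            le_trans (Nat.sub_le _ _) (Nat.sub_le _ _)⟩ ∨
          σ y = .inr ⟨t'.g, t'.x, t'.hx, t'.b, L ι t'.b t'.x - L ι b x + 1, by omega⟩ := by
      intro y hy
      have h2 := (hσ _ _).mpr hy
      rw [hbase] at h2
      rcases tail_nbrs ι
          (t := ⟨t'.g, t'.x, t'.hx, t'.b, L ι t'.b t'.x - L ι b x, Nat.sub_le _ _⟩)
          (show 1 ≤ L ι t'.b t'.x - L ι b x by omega) _ h2 with h | ⟨hle, h⟩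
      · exact Or.inl h
      · exact Or.inr h
    exact three_in_two
      (fun h => base_hub_ne_mate ι _ (σ.injective h))
      (fun h => base_hub_ne_next ι _ (σ.injective h))
      (fun h => base_mate_ne_next ι _ (σ.injective h))
      (hq _ (base_adj_hub ι hj0)) (hq _ (base_adj_mate ι hj0)) (hq _ (base_adj_next ι hj0))
  obtain ⟨hbeq, hxeq⟩ := L_inj hι hL'eq
  refine ⟨t'.g, fun j hj => ?_⟩
  obtain ⟨_, he⟩ := main (L ι b x - j) (Nat.sub_le _ _)
  have e1 : (⟨g, x, hx, b, L ι b x - (L ι b x - j), Nat.sub_le _ _⟩ : Tail 𝔊 ι) =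
      ⟨g, x, hx, b, j, hj⟩ := Tail.ext' rfl rfl rfl (by simp only [Tail.mk_j]; omega)
  have e2 : (⟨t'.g, t'.x, t'.hx, t'.b, L ι t'.b t'.x - (L ι b x - j), Nat.sub_le _ _⟩ : Tail 𝔊 ι) =
      ⟨t'.g, x, hx, b, j, hj⟩ := Tail.ext' rfl hxeq hbeq (by simp only [Tail.mk_j]; omega)
  rw [e1, e2] at he
  exact he

/-- image of a hub is a hub (needs at least two non-identity elements) -/
lemma hub_image (hbig : ∃ x1 x2 : 𝔊, x1 ≠ 1 ∧ x2 ≠ 1 ∧ x1 ≠ x2) (g : 𝔊) :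
    ∃ g' : 𝔊, σ (.inl g) = .inl g' := by
  obtain ⟨x1, x2, h1, h2, h12⟩ := hbig
  have a1 := (hσ _ _).mpr (hub_adj_u ι g x1 h1)
  have a2 := (hσ _ _).mpr (hub_adj_u ι g x2 h2)
  have a3 := (hσ _ _).mpr (hub_adj_v ι g x1 h1)
  have a4 := (hσ _ _).mpr (hub_adj_v ι g x2 h2)
  have d12 : σ (.inr ⟨g, x1, h1, false, 0, Nat.zero_le _⟩) ≠
      σ (.inr ⟨g, x2, h2, false, 0, Nat.zero_le _⟩) :=
    fun h => h12 (inr_mk_x (σ.injective h))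
  have d13 : σ (.inr ⟨g, x1, h1, false, 0, Nat.zero_le _⟩) ≠
      σ (.inr ⟨g * x1⁻¹, x1, h1, true, 0, Nat.zero_le _⟩) :=
    fun h => by simpa using inr_mk_b (σ.injective h)
  have d14 : σ (.inr ⟨g, x1, h1, false, 0, Nat.zero_le _⟩) ≠
      σ (.inr ⟨g * x2⁻¹, x2, h2, true, 0, Nat.zero_le _⟩) :=
    fun h => by simpa using inr_mk_b (σ.injective h)
  have d23 : σ (.inr ⟨g, x2, h2, false, 0, Nat.zero_le _⟩) ≠
      σ (.inr ⟨g * x1⁻¹, x1, h1, true, 0, Nat.zero_le _⟩) :=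
    fun h => by simpa using inr_mk_b (σ.injective h)
  have d24 : σ (.inr ⟨g, x2, h2, false, 0, Nat.zero_le _⟩) ≠
      σ (.inr ⟨g * x2⁻¹, x2, h2, true, 0, Nat.zero_le _⟩) :=
    fun h => by simpa using inr_mk_b (σ.injective h)
  have d34 : σ (.inr ⟨g * x1⁻¹, x1, h1, true, 0, Nat.zero_le _⟩) ≠
      σ (.inr ⟨g * x2⁻¹, x2, h2, true, 0, Nat.zero_le _⟩) :=
    fun h => h12 (inr_mk_x (σ.injective h))
  cases hw : σ (.inl g) with
  | inl g' => exact ⟨g', rfl⟩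
  | inr t =>
    exfalso
    rw [hw] at a1 a2 a3 a4
    rcases Nat.eq_zero_or_pos t.j with h0 | hpos
    · exact four_in_three d12 d13 d14 d23 d24 d34
        (base_nbrs ι h0 _ a1) (base_nbrs ι h0 _ a2) (base_nbrs ι h0 _ a3) (base_nbrs ι h0 _ a4)
    · have hq : ∀ y, (FG ι).Adj (.inr t) y →
          y = .inr ⟨t.g, t.x, t.hx, t.b, t.j - 1, le_trans (Nat.sub_le _ _) t.hj⟩ ∨
            y = (if h : t.j + 1 ≤ L ι t.b t.x then
              (.inr ⟨t.g, t.x, t.hx, t.b, t.j + 1, h⟩ : 𝔊 ⊕ Tail 𝔊 ι) else .inr t) := by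
        intro y hy
        rcases tail_nbrs ι hpos _ hy with h | ⟨hle, h⟩
        · exact Or.inl h
        · right
          rw [dif_pos hle]
          exact h
      exact three_in_two d12 d13 d23 (hq _ a1) (hq _ a2) (hq _ a3)

end Aut

/-! ## left translations as automorphisms -/

def shiftTail (a : 𝔊) (t : Tail 𝔊 ι) : Tail 𝔊 ι := ⟨a * t.g, t.x, t.hx, t.b, t.j, t.hj⟩

def shiftFun (a : 𝔊) : 𝔊 ⊕ Tail 𝔊 ι → 𝔊 ⊕ Tail 𝔊 ι
  | .inl g => .inl (a * g)
  | .inr t => .inr (shiftTail ι a t)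

def shiftPerm (a : 𝔊) : Equiv.Perm (𝔊 ⊕ Tail 𝔊 ι) where
  toFun := shiftFun ι a
  invFun := shiftFun ι a⁻¹
  left_inv := by
    rintro (g | t) <;> simp [shiftFun, shiftTail, inv_mul_cancel_left]
  right_inv := by
    rintro (g | t) <;> simp [shiftFun, shiftTail, mul_inv_cancel_left]

lemma hubOf_shift (a : 𝔊) (t : Tail 𝔊 ι) : hubOf ι (shiftTail ι a t) = a * hubOf ι t := by
  cases hb : t.b <;> simp [hubOf, shiftTail, hb, mul_assoc]

lemma shift_mem (a : 𝔊) (u v : 𝔊 ⊕ Tail 𝔊 ι) :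
    (FG ι).Adj (shiftPerm ι a u) (shiftPerm ι a v) ↔ (FG ι).Adj u v := by
  rcases u with g | t <;> rcases v with g' | t'
  · exact Iff.rfl
  · show ((shiftTail ι a t').j = 0 ∧ hubOf ι (shiftTail ι a t') = a * g) ↔ _
    rw [hubOf_shift]
    constructor
    · rintro ⟨hj, hh⟩
      exact ⟨hj, mul_left_cancel hh⟩
    · rintro ⟨hj, hh⟩
      exact ⟨hj, by rw [hh]⟩
  · show ((shiftTail ι a t).j = 0 ∧ hubOf ι (shiftTail ι a t) = a * g') ↔ _
    rw [hubOf_shift]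
    constructor
    · rintro ⟨hj, hh⟩
      exact ⟨hj, mul_left_cancel hh⟩
    · rintro ⟨hj, hh⟩
      exact ⟨hj, by rw [hh]⟩
  · show (a * t.g = a * t'.g ∧ _) ↔ _
    rw [mul_right_inj]
    exact Iff.rfl

/-- the translation homomorphism into the automorphism group -/
def ΦM : 𝔊 →* (FG ι).autGroup where
  toFun a := ⟨shiftPerm ι a, shift_mem ι a⟩
  map_one' := by
    refine Subtype.ext (Equiv.ext ?_)
    rintro (g | t) <;> simp [shiftPerm, shiftFun, shiftTail]
  map_mul' a b := by
    refine Subtype.ext (Equiv.ext ?_)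
    rintro (g | t) <;>
      simp [shiftPerm, shiftFun, shiftTail, mul_assoc, Subgroup.coe_mul, Equiv.Perm.mul_apply]

lemma ΦM_injective : Function.Injective (ΦM ι) := by
  intro a b hab
  have := congrArg (fun F : (FG ι).autGroup => (F : Equiv.Perm (𝔊 ⊕ Tail 𝔊 ι)) (Sum.inl 1)) hab
  simp only [ΦM, MonoidHom.coe_mk, OneHom.coe_mk] at this
  have h2 : Sum.inl (α := 𝔊) (β := Tail 𝔊 ι) (a * 1) = Sum.inl (b * 1) := this
  simpa using h2

lemma ΦM_surjective (hι : Function.Injective ι)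
    (hbig : ∃ x1 x2 : 𝔊, x1 ≠ 1 ∧ x2 ≠ 1 ∧ x1 ≠ x2) :
    Function.Surjective (ΦM ι) := by
  intro τ
  obtain ⟨σ, hσ⟩ := τ
  -- hub translation function
  have hf : ∀ g : 𝔊, ∃ g', σ (.inl g) = .inl g' := hub_image σ hσ hbig
  choose F hF using hf
  -- values of chains at their bases
  have baseval : ∀ (g x : 𝔊) (hx : x ≠ 1) (b : Bool) (g' : 𝔊),
      (∀ j (hj : j ≤ L ι b x), σ (.inr ⟨g, x, hx, b, j, hj⟩) = .inr ⟨g', x, hx, b, j, hj⟩) →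
      (b = false → g' = F g) ∧ (b = true → g' * x = F (g * x)) := by
    intro g x hx b g' hc
    constructor
    · rintro rfl
      have a1 := (hσ _ _).mpr (hub_adj_u ι g x hx)
      rw [hF, hc 0 (Nat.zero_le _)] at a1
      exact a1.2
    · rintro rfl
      have a1 : (FG ι).Adj (.inl (g * x)) (.inr ⟨g, x, hx, true, 0, Nat.zero_le _⟩) := ⟨rfl, rfl⟩
      have a2 := (hσ _ _).mpr a1
      rw [hF, hc 0 (Nat.zero_le _)] at a2
      exact a2.2
  -- F is multiplication by F 1
  have hmul : ∀ (g x : 𝔊), x ≠ 1 → F (g * x) = F g * x := by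
    intro g x hx
    obtain ⟨gU, hU⟩ := chain σ hσ hι g x hx false
    obtain ⟨gV, hV⟩ := chain σ hσ hι g x hx true
    have hUF := (baseval g x hx false gU hU).1 rfl
    have hVF := (baseval g x hx true gV hV).2 rfl
    -- gU = gV since the two bases are adjacent
    have a1 : (FG ι).Adj (.inr (⟨g, x, hx, false, 0, Nat.zero_le _⟩ : Tail 𝔊 ι))
        (.inr ⟨g, x, hx, true, 0, Nat.zero_le _⟩) := ⟨rfl, rfl, Or.inr ⟨rfl, rfl, by simp⟩⟩
    have a2 := (hσ _ _).mpr a1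
    rw [hU 0 (Nat.zero_le _), hV 0 (Nat.zero_le _)] at a2
    have hgUV : gU = gV := a2.1
    rw [← hVF, ← hgUV, hUF]
  have htrans : ∀ g : 𝔊, F g = F 1 * g := by
    intro g
    rcases eq_or_ne g 1 with rfl | hg
    · rw [mul_one]
    · calc F g = F (1 * g) := by rw [one_mul]
        _ = F 1 * g := hmul 1 g hg
  refine ⟨F 1, ?_⟩
  refine Subtype.ext (Equiv.ext ?_)
  rintro (g | t)
  · show Sum.inl (F 1 * g) = σ (.inl g)
    rw [hF g, htrans g]
  · show Sum.inr (shiftTail ι (F 1) t) = σ (.inr t)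
    obtain ⟨gB, hB⟩ := chain σ hσ hι t.g t.x t.hx t.b
    have hBt := hB t.j t.hj
    have : σ (.inr t) = .inr ⟨gB, t.x, t.hx, t.b, t.j, t.hj⟩ := hBt
    rw [this]
    refine congrArg Sum.inr (Tail.ext' ?_ rfl rfl rfl)
    show F 1 * t.g = gB
    obtain ⟨hb1, hb2⟩ := baseval t.g t.x t.hx t.b gB hB
    rcases Bool.eq_false_or_eq_true t.b with hb' | hb'
    · have h2 : gB * t.x = F 1 * (t.g * t.x) := by rw [hb2 hb', htrans]
      rw [← mul_assoc] at h2
      exact (mul_right_cancel h2).symm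
    · rw [← htrans t.g]
      exact (hb1 hb').symm


/-! ## transporting a graph along an equivalence of vertex types -/

def transportGraph {α β : Type*} (e : α ≃ β) (G : SimpleGraph α) : SimpleGraph β where
  Adj a b := G.Adj (e.symm a) (e.symm b)
  symm := ⟨fun a b h => G.adj_symm h⟩
  loopless := ⟨fun a h => G.irrefl h⟩

def autGroupCongr {α β : Type*} (e : α ≃ β) (G : SimpleGraph α) :
    (transportGraph e G).autGroup ≃* G.autGroup where
  toFun τ := ⟨e.symm.permCongr τ.1, by
    intro u v
    have h := τ.2 (e u) (e v)
    simp only [Equiv.permCongr_apply, Equiv.symm_symm]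
    have h2 : (transportGraph e G).Adj (e u) (e v) ↔ G.Adj u v := by
      show G.Adj (e.symm (e u)) (e.symm (e v)) ↔ _
      rw [Equiv.symm_apply_apply, Equiv.symm_apply_apply]
    exact (h.trans h2)⟩
  invFun τ := ⟨e.permCongr τ.1, by
    intro u v
    have h := τ.2 (e.symm u) (e.symm v)
    simp only [Equiv.permCongr_apply]
    show G.Adj (e.symm (e (τ.1 (e.symm u)))) (e.symm (e (τ.1 (e.symm v)))) ↔
      (transportGraph e G).Adj u v
    rw [Equiv.symm_apply_apply, Equiv.symm_apply_apply]
    exact h⟩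
  left_inv τ := by
    refine Subtype.ext (Equiv.ext fun a => ?_)
    simp [Equiv.permCongr_apply]
  right_inv τ := by
    refine Subtype.ext (Equiv.ext fun a => ?_)
    simp [Equiv.permCongr_apply]
  map_mul' τ ρ := by
    refine Subtype.ext (Equiv.ext fun a => ?_)
    simp [Equiv.permCongr_apply, Equiv.Perm.mul_apply]

/-! ## assembling the main case -/

lemma exists_graph (𝔊 : Type*) [Group 𝔊] [Fintype 𝔊] (h3 : 3 ≤ Fintype.card 𝔊) :
    ∃ (n : ℕ) (G : SimpleGraph (Fin n)), Nonempty (G.autGroup ≃* 𝔊) := by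
  classical
  set ι : 𝔊 → ℕ := fun g => ((Fintype.equivFin 𝔊) g : ℕ) with hιdef
  have hι : Function.Injective ι := fun a b h =>
    (Fintype.equivFin 𝔊).injective (Fin.ext h)
  have hbig : ∃ x1 x2 : 𝔊, x1 ≠ 1 ∧ x2 ≠ 1 ∧ x1 ≠ x2 := by
    obtain ⟨x1, hx1⟩ := Fintype.exists_ne_of_one_lt_card (by omega) (1 : 𝔊)
    have hcompl : (({x1, 1} : Finset 𝔊)ᶜ).Nonempty := by
      rw [← Finset.card_pos, Finset.card_compl]
      have : ({x1, 1} : Finset 𝔊).card ≤ 2 := Finset.card_insert_le _ _ |>.trans (by simp)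
      omega
    obtain ⟨x2, hx2⟩ := hcompl
    simp only [Finset.mem_compl, Finset.mem_insert, Finset.mem_singleton, not_or] at hx2
    exact ⟨x1, x2, hx1, hx2.2, fun h => hx2.1 h.symm⟩
  haveI : Finite (Tail 𝔊 ι) := by
    apply Finite.of_injective (fun t : Tail 𝔊 ι =>
      (t.g, t.x, t.b, (⟨t.j, by
        have h1 := t.hj
        have h2 : ι t.x < Fintype.card 𝔊 := (Fintype.equivFin 𝔊 t.x).isLt
        have h3' : (bif t.b then 2 else 1) ≤ 2 := by cases t.b <;> simp
        simp only [L] at h1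
        omega⟩ : Fin (2 * Fintype.card 𝔊 + 1))))
    intro t t' h
    simp only [Prod.mk.injEq, Fin.mk.injEq] at h
    exact Tail.ext' h.1 h.2.1 h.2.2.1 h.2.2.2
  haveI : Finite (𝔊 ⊕ Tail 𝔊 ι) := inferInstance
  obtain ⟨n, ⟨e⟩⟩ := Finite.exists_equiv_fin (𝔊 ⊕ Tail 𝔊 ι)
  refine ⟨n, transportGraph e (FG ι), ⟨?_⟩⟩
  exact (autGroupCongr e (FG ι)).trans
    (MulEquiv.ofBijective (ΦM ι) ⟨ΦM_injective ι, ΦM_surjective ι hι hbig⟩).symm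

/-- two subsingleton groups are isomorphic -/
def trivMulEquiv {A B : Type*} [Group A] [Group B] [Subsingleton A] [Subsingleton B] :
    A ≃* B where
  toFun _ := 1
  invFun _ := 1
  left_inv _ := Subsingleton.elim _ _
  right_inv _ := Subsingleton.elim _ _
  map_mul' _ _ := Subsingleton.elim _ _

end FruchtAux


/-- Frucht's theorem: every finite group is the automorphism group of some finite
simple graph. -/
theorem frucht (𝔊 : Type*) [Group 𝔊] [Finite 𝔊] :
    ∃ (n : ℕ) (G : SimpleGraph (Fin n)), Nonempty (G.autGroup ≃* 𝔊) := by
  haveI := Fintype.ofFinite 𝔊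
  rcases lt_or_ge (Fintype.card 𝔊) 3 with hlt | h3
  · have h1 : 0 < Fintype.card 𝔊 := Fintype.card_pos
    have : Fintype.card 𝔊 = 1 ∨ Fintype.card 𝔊 = 2 := by omega
    rcases this with h | h
    · haveI : Subsingleton 𝔊 := Fintype.card_le_one_iff_subsingleton.mp (by omega)
      haveI : Subsingleton (Equiv.Perm (Fin 0)) := ⟨fun a b => Equiv.ext fun x => x.elim0⟩
      haveI : Subsingleton ((⊥ : SimpleGraph (Fin 0)).autGroup) :=
        ⟨fun a b => Subtype.ext (Subsingleton.elim _ _)⟩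
      exact ⟨0, ⊥, ⟨FruchtAux.trivMulEquiv⟩⟩
    · refine ⟨2, ⊥, ⟨?_⟩⟩
      have htop : (⊥ : SimpleGraph (Fin 2)).autGroup = ⊤ := by
        ext σ
        constructor
        · intro _
          trivial
        · intro _ u v
          simp [SimpleGraph.autGroup]
      haveI : Fact (Nat.Prime 2) := ⟨Nat.prime_two⟩
      have hcard1 : Nat.card (Equiv.Perm (Fin 2)) = 2 := by
        simp [Nat.card_eq_fintype_card, Fintype.card_perm]
      have hcard2 : Nat.card 𝔊 = 2 := by rw [Nat.card_eq_fintype_card, h]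
      exact (MulEquiv.subgroupCongr htop).trans
        (Subgroup.topEquiv.trans (mulEquivOfPrimeCardEq hcard1 hcard2))
  · exact FruchtAux.exists_graph 𝔊 h3
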